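/- Suppose r > 0 and θ satisfy 0 = p₁ + r(s₁ - cos 12θ) and 0 = p₂ + r(s₂ + sin 12θ), with cos(6θ) ≠ 0. Then t = tan(6θ) satisfies the quadratic equation (-p₂ + p₁s₂ - p₂s₁)t² + 2p₁ t + p₂ + p₁s₂ - p₂s₁ = 0. -/

import Mathlib

open Real

theorem equilibria_quadratic (p₁ p₂ s₁ s₂ r θ : ℝ) (hr : 0 < r)
    (h1 : p₁ + r * (s₁ - Real.cos (12 * θ)) = 0)
    (h2 : p₂ + r * (s₂ + Real.sin (12 * θ)) = 0)
    (hc : Real.cos (6 * θ) ≠ 0) :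
    (-p₂ + p₁ * s₂ - p₂ * s₁) * Real.tan (6 * θ) ^ 2 + 2 * p₁ * Real.tan (6 * θ)
      + (p₂ + p₁ * s₂ - p₂ * s₁) = 0 := by
  have h12 : (12 : ℝ) * θ = 2 * (6 * θ) := by ring
  rw [h12] at h1 h2
  rw [Real.cos_two_mul] at h1
  rw [Real.sin_two_mul] at h2
  rw [Real.tan_eq_sin_div_cos]
  have hpy := Real.sin_sq_add_cos_sq (6 * θ)
  set c := Real.cos (6 * θ)
  set s := Real.sin (6 * θ)
  field_simp
  linear_combination ((s₂ * s ^ 2 + 2 * s * c + s₂ * c ^ 2) * h1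
    + (-(1 + s₁) * s ^ 2 + (1 - s₁) * c ^ 2) * h2
    + (2 * r * s * c * (1 + s₁) + 2 * r * s₂ * c ^ 2) * hpy)
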